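/- (Fidelity preservation) Define the measurement fidelity f(M) := (1/2^n) Σ_x ⟨x|Π_x|x⟩ for a measurement channel M with POVM {Π_x}. Then the IZ-dephased, XY-twirled, and Pauli-twirled measurement channels all have the same fidelity as M: f(M) = f(M^{IZ}) = f(M^{XY}) = f(M^{Pauli}). -/

import Mathlib

open ComplexOrder Matrix Finset

/-- Single-qubit Pauli matrix `i^{ax·az} X^{ax} Z^{az}`:
`(false,false) = I`, `(true,false) = X`, `(false,true) = Z`, `(true,true) = Y`. -/
noncomputable def pauli1 (ax az : Bool) : Matrix Bool Bool ℂ := fun x y =>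
  match ax, az with
  | false, false => if x = y then 1 else 0
  | true,  false => if x = y then 0 else 1
  | false, true  => if x = y then (if x then -1 else 1) else 0
  | true,  true  => if x = false ∧ y = true then -Complex.I
                    else if x = true ∧ y = false then Complex.I else 0

/-- The `n`-qubit Pauli word with X-part `a` and Z-part `b`. -/
noncomputable def pauliW {n : ℕ} (a b : Fin n → Bool) :
    Matrix (Fin n → Bool) (Fin n → Bool) ℂ :=
  fun x y => ∏ i, pauli1 (a i) (b i) (x i) (y i)

/-- The measurement channel of a POVM `{Pm x}`. -/
noncomputable def mchan {n : ℕ}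
    (Pm : (Fin n → Bool) → Matrix (Fin n → Bool) (Fin n → Bool) ℂ)
    (ρ : Matrix (Fin n → Bool) (Fin n → Bool) ℂ) :
    Matrix (Fin n → Bool) (Fin n → Bool) ℂ :=
  ∑ x, (Pm x * ρ).trace • Matrix.single x x (1 : ℂ)

/-- Measurement fidelity `f = (1/2^n) Σ_x ⟨x|Pm_x|x⟩` of a POVM. -/
noncomputable def mfid {n : ℕ}
    (Pm : (Fin n → Bool) → Matrix (Fin n → Bool) (Fin n → Bool) ℂ) : ℂ :=
  ((1 : ℂ) / 2 ^ n) * ∑ x, Pm x x x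


lemma pauli1_mul (ax az u x v : Bool) :
    pauli1 ax az u x * pauli1 ax az x v
      = if u = xor ax x ∧ v = xor ax x then 1 else 0 := by
  rcases ax <;> rcases az <;> rcases u <;> rcases x <;> rcases v <;>
    simp [pauli1, Complex.I_mul_I]

lemma conj_std {n : ℕ} (a b x : Fin n → Bool) :
    pauliW a b * Matrix.single x x (1 : ℂ) * pauliW a b
      = Matrix.single (fun i => xor (a i) (x i)) (fun i => xor (a i) (x i)) 1 := by
  ext u v
  have h1 : (pauliW a b * Matrix.single x x (1 : ℂ) * pauliW a b) u v
      = pauliW a b u x * pauliW a b x v := by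
    simp [Matrix.mul_apply, Matrix.single, Matrix.of_apply, ite_and,
      Finset.sum_ite_eq, Finset.mul_sum, Finset.sum_mul]
  rw [h1, pauliW, pauliW, ← Finset.prod_mul_distrib]
  simp only [pauli1_mul]
  rw [Finset.prod_boole]
  simp [Matrix.single, funext_iff, eq_comm, forall_and]

lemma trace_mul_std {n : ℕ} (A : Matrix (Fin n → Bool) (Fin n → Bool) ℂ)
    (z : Fin n → Bool) : (A * Matrix.single z z (1 : ℂ)).trace = A z z := by
  simp [Matrix.trace, Matrix.diag, Matrix.mul_apply, Matrix.single, ite_and]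

lemma mchan_diag {n : ℕ} (Pm : (Fin n → Bool) → Matrix (Fin n → Bool) (Fin n → Bool) ℂ)
    (ρ : Matrix (Fin n → Bool) (Fin n → Bool) ℂ) (x : Fin n → Bool) :
    mchan Pm ρ x x = (Pm x * ρ).trace := by
  simp [mchan, Matrix.sum_apply, Matrix.single]

lemma conj_mchan {n : ℕ} (Pm : (Fin n → Bool) → Matrix (Fin n → Bool) (Fin n → Bool) ℂ)
    (a b : Fin n → Bool) (ρ : Matrix (Fin n → Bool) (Fin n → Bool) ℂ) (x : Fin n → Bool) :
    (pauliW a b * mchan Pm ρ * pauliW a b) x x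
      = (Pm (fun i => xor (a i) (x i)) * ρ).trace := by
  have : pauliW a b * mchan Pm ρ * pauliW a b
      = ∑ y, (Pm y * ρ).trace •
          Matrix.single (fun i => xor (a i) (y i)) (fun i => xor (a i) (y i)) (1:ℂ) := by
    rw [mchan, Finset.mul_sum, Finset.sum_mul]
    refine Finset.sum_congr rfl fun y _ => ?_
    rw [Matrix.mul_smul, Matrix.smul_mul, conj_std]
  rw [this, Matrix.sum_apply]
  have hx : ∀ y : Fin n → Bool,
      ((Pm y * ρ).trace • Matrix.single (fun i => xor (a i) (y i))
        (fun i => xor (a i) (y i)) (1:ℂ)) x x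
      = if y = (fun i => xor (a i) (x i)) then (Pm y * ρ).trace else 0 := by
    intro y
    by_cases h : y = fun i => xor (a i) (x i)
    · subst h
      simp [Matrix.single, funext_iff]
    · rw [if_neg h]
      have hne : (fun i => xor (a i) (y i)) ≠ x := by
        intro hc
        apply h
        funext i
        have := congrFun hc i
        rcases ha : a i <;> rcases hy : y i <;> simp [ha, hy] at this ⊢ <;> simp [← this]
      simp [Matrix.single_apply_of_ne, hne]
  simp only [hx]
  simp

/-- Fidelity preservation: if `PmIZ`, `PmXY`, `PmP` are the POVMs of the IZ-dephased,
XY-twirled, and Pauli-twirled measurement channels of a measurement channel `M` with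
POVM `{Pm x}`, then all four measurements have the same measurement fidelity.
(`{I,Z}^⊗n` words are `pauliW 0 s`, `{X,Y}^⊗n` words are `pauliW 1 s`.) -/
theorem fidelity_preserving {n : ℕ}
    (Pm PmIZ PmXY PmP : (Fin n → Bool) → Matrix (Fin n → Bool) (Fin n → Bool) ℂ)
    (hpos : ∀ x, (Pm x).PosSemidef) (hsum : ∑ x, Pm x = 1)
    (hIZ : ∀ ρ, mchan PmIZ ρ
        = ((1 : ℂ) / 2 ^ n) •
            ∑ s, mchan Pm (pauliW (fun _ => false) s * ρ * pauliW (fun _ => false) s))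
    (hXY : ∀ ρ, mchan PmXY ρ
        = ((1 : ℂ) / 2 ^ n) •
            ∑ s, pauliW (fun _ => true) s *
              mchan Pm (pauliW (fun _ => true) s * ρ * pauliW (fun _ => true) s) *
              pauliW (fun _ => true) s)
    (hP : ∀ ρ, mchan PmP ρ
        = ((1 : ℂ) / 4 ^ n) •
            ∑ a, ∑ b, pauliW a b * mchan Pm (pauliW a b * ρ * pauliW a b) * pauliW a b) :
    mfid Pm = mfid PmIZ ∧ mfid Pm = mfid PmXY ∧ mfid Pm = mfid PmP := by
  have hcard : (Finset.univ : Finset (Fin n → Bool)).card = 2 ^ n := by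
    simp [Finset.card_univ]
  have h2 : (2 : ℂ) ^ n ≠ 0 := pow_ne_zero _ two_ne_zero
  have h4 : (4 : ℂ) ^ n ≠ 0 := pow_ne_zero _ (by norm_num)
  -- generic diagonal extraction for each x
  have hdiag : ∀ (Q : (Fin n → Bool) → Matrix (Fin n → Bool) (Fin n → Bool) ℂ)
      (ρ : Matrix (Fin n → Bool) (Fin n → Bool) ℂ) (x : Fin n → Bool),
      mchan Q (Matrix.single x x 1) x x = Q x x x := by
    intro Q ρ x
    rw [mchan_diag, trace_mul_std]
  -- IZ case
  have hIZd : ∀ x, PmIZ x x x = Pm x x x := by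
    intro x
    have h := congrFun (congrFun (hIZ (Matrix.single x x 1)) x) x
    rw [hdiag PmIZ 0 x] at h
    simp only [Matrix.smul_apply, Matrix.sum_apply, conj_std, smul_eq_mul] at h
    have hx0 : (fun i : Fin n => xor false (x i)) = x := by
      funext i; simp
    rw [hx0] at h
    simp only [mchan_diag, trace_mul_std, Finset.sum_const, hcard, nsmul_eq_mul] at h
    rw [h]
    push_cast
    field_simp
  -- XY case
  have hXYd : ∀ x, PmXY x x x
      = Pm (fun i => !(x i)) (fun i => !(x i)) (fun i => !(x i)) := by
    intro x
    have h := congrFun (congrFun (hXY (Matrix.single x x 1)) x) x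
    rw [hdiag PmXY 0 x] at h
    simp only [Matrix.smul_apply, Matrix.sum_apply, conj_std, smul_eq_mul] at h
    have hx1 : (fun i : Fin n => xor true (x i)) = fun i => !(x i) := by
      funext i; simp
    rw [hx1] at h
    simp only [conj_mchan, hx1, trace_mul_std, Finset.sum_const, hcard, nsmul_eq_mul] at h
    rw [h]
    push_cast
    field_simp
  -- Pauli case
  have hPd : ∀ x, PmP x x x
      = ((1:ℂ) / 4 ^ n) * ((2:ℂ) ^ n *
          ∑ a : Fin n → Bool, Pm (fun i => xor (a i) (x i)) (fun i => xor (a i) (x i))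
            (fun i => xor (a i) (x i))) := by
    intro x
    have h := congrFun (congrFun (hP (Matrix.single x x 1)) x) x
    rw [hdiag PmP 0 x] at h
    simp only [Matrix.smul_apply, Matrix.sum_apply, conj_std, smul_eq_mul,
      conj_mchan, trace_mul_std, Finset.sum_const, hcard, nsmul_eq_mul] at h
    rw [h]
    push_cast
    simp only [Finset.mul_sum]
  -- negation bijection
  have hneg : Function.Bijective (fun x : Fin n → Bool => fun i => !(x i)) :=
    Function.Involutive.bijective (fun x => by funext i; simp)
  refine ⟨?_, ?_, ?_⟩
  · rw [mfid, mfid]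
    congr 1
    exact Finset.sum_congr rfl fun x _ => (hIZd x).symm
  · rw [mfid, mfid]
    congr 1
    refine Fintype.sum_bijective _ hneg (fun x => Pm x x x)
      (fun x => PmXY x x x) (fun x => ?_)
    show Pm x x x = PmXY (fun i => !(x i)) (fun i => !(x i)) (fun i => !(x i))
    rw [hXYd]
    congr 1 <;> funext i <;> simp
  · rw [mfid, mfid]
    have hswap : ∑ x : Fin n → Bool, ∑ a : Fin n → Bool,
        Pm (fun i => xor (a i) (x i)) (fun i => xor (a i) (x i))
          (fun i => xor (a i) (x i))
        = (2:ℂ) ^ n * ∑ x : Fin n → Bool, Pm x x x := by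
      rw [Finset.sum_comm]
      have hinner : ∀ a : Fin n → Bool,
          ∑ x : Fin n → Bool, Pm (fun i => xor (a i) (x i)) (fun i => xor (a i) (x i))
            (fun i => xor (a i) (x i)) = ∑ x : Fin n → Bool, Pm x x x := by
        intro a
        have hb : Function.Bijective (fun x : Fin n → Bool => fun i => xor (a i) (x i)) :=
          Function.Involutive.bijective (fun x => by
            funext i
            show xor (a i) (xor (a i) (x i)) = x i
            cases a i <;> simp)
        refine (Fintype.sum_bijective _ hb (fun x => Pm x x x)
          (fun y => Pm (fun i => xor (a i) (y i)) (fun i => xor (a i) (y i))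
            (fun i => xor (a i) (y i))) (fun x => ?_)).symm
        show Pm x x x = Pm (fun i => xor (a i) (xor (a i) (x i)))
          (fun i => xor (a i) (xor (a i) (x i))) (fun i => xor (a i) (xor (a i) (x i)))
        congr 1 <;> funext i <;> cases a i <;> simp
      rw [Finset.sum_congr rfl fun a _ => hinner a, Finset.sum_const, hcard, nsmul_eq_mul]
      push_cast
      ring
    have hsum2 : ∑ x : Fin n → Bool, PmP x x x
        = ((1:ℂ)/4^n) * ((2:ℂ)^n * ((2:ℂ)^n * ∑ x : Fin n → Bool, Pm x x x)) := by
      rw [Finset.sum_congr rfl fun x _ => hPd x, ← Finset.mul_sum, ← Finset.mul_sum, hswap]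
    rw [hsum2]
    have h42 : (4:ℂ) ^ n = 2 ^ n * 2 ^ n := by
      rw [← mul_pow]; norm_num
    field_simp [h42]
    rw [h42]; ring
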